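/- arXiv:2111.12620 — 2 statements merged into one kernel-verified Lean document; each statement's English description precedes it below -/
import Mathlib

section
/- Newton–Kantorovich existence and uniqueness (affine-covariant form): let Y be a real Banach space, U ⊆ Y open, G : U → Y continuously Fréchet differentiable, and y₀ ∈ U such that the Fréchet derivative DG(y₀) is invertible with bounded inverse. Suppose β, L > 0 satisfy βL < 1/2, the closed ball B(y₀, L^{-1}) is contained in U, ‖DG(y₀)^{-1}(DG(z) − DG(y))‖ ≤ L‖z − y‖ for all y, z ∈ B(y₀, L^{-1}), and ‖DG(y₀)^{-1}G(y₀)‖ ≤ β. Then there exists y* with ‖y* − y₀‖ ≤ (1 − √(1 − 2Lβ))/L such that G(y*) = 0, and y* is the unique zero of G in the closed ball B(y₀, L^{-1}). -/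
open Metric

set_option maxHeartbeats 1000000 in
/-- Newton–Kantorovich existence and uniqueness (affine-covariant form):
if `G` is `C¹` on an open set `U`, `DG(y₀)` is invertible with bounded inverse, `βL < 1/2`,
`B(y₀, L⁻¹) ⊆ U`, `‖DG(y₀)⁻¹(DG z − DG y)‖ ≤ L‖z − y‖` on `B(y₀, L⁻¹)`, and
`‖DG(y₀)⁻¹ G(y₀)‖ ≤ β`, then `G` has a zero `y*` with
`‖y* − y₀‖ ≤ (1 − √(1 − 2Lβ))/L`, unique in `B(y₀, L⁻¹)`. -/
theorem stmt10
    {Y : Type*} [NormedAddCommGroup Y] [NormedSpace ℝ Y] [CompleteSpace Y]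
    (U : Set Y) (hU : IsOpen U)
    (G : Y → Y) (DG : Y → Y →L[ℝ] Y)
    (hderiv : ∀ y ∈ U, HasFDerivAt G (DG y) y)
    (hcont : ContinuousOn DG U)
    (y₀ : Y) (hy₀ : y₀ ∈ U)
    (Dinv : Y →L[ℝ] Y)
    (hinv₁ : Dinv.comp (DG y₀) = ContinuousLinearMap.id ℝ Y)
    (hinv₂ : (DG y₀).comp Dinv = ContinuousLinearMap.id ℝ Y)
    (β L : ℝ) (hβ : 0 < β) (hL : 0 < L) (hβL : β * L < 1 / 2)
    (hball : closedBall y₀ L⁻¹ ⊆ U)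
    (hLip : ∀ y ∈ closedBall y₀ L⁻¹, ∀ z ∈ closedBall y₀ L⁻¹,
      ‖Dinv.comp (DG z - DG y)‖ ≤ L * ‖z - y‖)
    (hres : ‖Dinv (G y₀)‖ ≤ β) :
    ∃ ystar : Y,
      ‖ystar - y₀‖ ≤ (1 - Real.sqrt (1 - 2 * L * β)) / L ∧
      G ystar = 0 ∧
      ∀ z ∈ closedBall y₀ L⁻¹, G z = 0 → z = ystar := by
  have h2Lβ : 0 < 1 - 2 * L * β := by nlinarith
  set s : ℝ := Real.sqrt (1 - 2 * L * β) with hs_def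
  have hs0 : 0 < s := Real.sqrt_pos.2 h2Lβ
  have hs_sq : s ^ 2 = 1 - 2 * L * β := Real.sq_sqrt h2Lβ.le
  have hs1 : s < 1 := by nlinarith
  set r : ℝ := (1 - s) / L with hr_def
  have hr0 : 0 < r := by
    apply div_pos _ hL; linarith
  have hLr : L * r = 1 - s := by rw [hr_def]; field_simp
  have hrL : r ≤ L⁻¹ := by
    rw [hr_def, inv_eq_one_div]
    gcongr
    linarith
  have hLinv0 : (0:ℝ) ≤ L⁻¹ := by positivity
  have h0big : y₀ ∈ closedBall y₀ L⁻¹ := mem_closedBall_self hLinv0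
  set F : Y → Y := fun y => y - Dinv (G y) with hF
  -- derivative of F
  have hDF : ∀ y ∈ U, HasFDerivAt F (ContinuousLinearMap.id ℝ Y - Dinv.comp (DG y)) y := by
    intro y hy
    exact (hasFDerivAt_id y).sub (Dinv.hasFDerivAt.comp y (hderiv y hy))
  have hDFnorm : ∀ y ∈ closedBall y₀ L⁻¹,
      ‖ContinuousLinearMap.id ℝ Y - Dinv.comp (DG y)‖ ≤ L * ‖y - y₀‖ := by
    intro y hy
    have h := hLip y hy y₀ h0big
    have he : ContinuousLinearMap.id ℝ Y - Dinv.comp (DG y) = Dinv.comp (DG y₀ - DG y) := by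
      rw [ContinuousLinearMap.comp_sub, hinv₁]
    rw [he]
    calc ‖Dinv.comp (DG y₀ - DG y)‖ ≤ L * ‖y₀ - y‖ := h
      _ = L * ‖y - y₀‖ := by rw [norm_sub_rev]
  -- key segment estimate
  have keyA : ∀ y ∈ closedBall y₀ L⁻¹, ∀ z ∈ closedBall y₀ L⁻¹,
      ‖F z - F y‖ ≤ L * ((‖y - y₀‖ + ‖z - y₀‖) / 2) * ‖z - y‖ := by
    intro y hy z hz
    set v : Y := z - y with hv
    set a : ℝ := ‖y - y₀‖ with ha
    set b : ℝ := ‖z - y₀‖ with hb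
    have ha0 : 0 ≤ a := norm_nonneg _
    have hb0 : 0 ≤ b := norm_nonneg _
    have hmem : ∀ t ∈ Set.Icc (0:ℝ) 1, y + t • v ∈ closedBall y₀ L⁻¹ := by
      intro t ht
      have h1 : y + t • v = (1 - t) • y + t • z := by rw [hv]; module
      rw [h1]
      exact convex_closedBall y₀ L⁻¹ hy hz (by linarith [ht.2]) ht.1 (by ring)
    have hxt : ∀ t ∈ Set.Icc (0:ℝ) 1, ‖y + t • v - y₀‖ ≤ (1 - t) * a + t * b := by
      intro t ht
      have h1 : y + t • v - y₀ = (1 - t) • (y - y₀) + t • (z - y₀) := by rw [hv]; module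
      rw [h1]
      refine (norm_add_le _ _).trans ?_
      rw [norm_smul, norm_smul, Real.norm_of_nonneg (by linarith [ht.2]),
        Real.norm_of_nonneg ht.1]
    set g : ℝ → Y := fun t => F (y + t • v) - F y with hg
    have hg' : ∀ t ∈ Set.Icc (0:ℝ) 1, HasDerivAt g
        ((ContinuousLinearMap.id ℝ Y - Dinv.comp (DG (y + t • v))) v) t := by
      intro t ht
      have hξU : y + t • v ∈ U := hball (hmem t ht)
      have hline : HasDerivAt (fun t : ℝ => y + t • v) v t := by
        simpa using ((hasDerivAt_id t).smul_const v).const_add y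
      have h2 := (hDF _ hξU).comp_hasDerivAt t hline
      simpa [hg] using h2.sub_const (F y)
    have hgc : ContinuousOn g (Set.Icc 0 1) := fun t ht =>
      (hg' t ht).continuousAt.continuousWithinAt
    set B : ℝ → ℝ := fun t => L * ‖v‖ * (a * t + (b - a) / 2 * t ^ 2) with hB
    have hBd : ∀ t, HasDerivAt B (L * ‖v‖ * (a + (b - a) * t)) t := by
      intro t
      have h1 : HasDerivAt (fun t : ℝ => a * t + (b - a) / 2 * t ^ 2)
          (a + (b - a) * t) t := by
        have h2 : HasDerivAt (fun x : ℝ => a * x + (b - a) / 2 * x ^ 2)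
            (a * 1 + (b - a) / 2 * (↑2 * t ^ 1)) t :=
          ((hasDerivAt_id t).const_mul a).add ((hasDerivAt_pow 2 t).const_mul ((b - a) / 2))
        convert h2 using 1
        push_cast
        ring
      simpa [hB] using h1.const_mul (L * ‖v‖)
    have bound : ∀ t ∈ Set.Ico (0:ℝ) 1,
        ‖(ContinuousLinearMap.id ℝ Y - Dinv.comp (DG (y + t • v))) v‖
          ≤ L * ‖v‖ * (a + (b - a) * t) := by
      intro t ht
      have ht' : t ∈ Set.Icc (0:ℝ) 1 := ⟨ht.1, ht.2.le⟩
      calc ‖(ContinuousLinearMap.id ℝ Y - Dinv.comp (DG (y + t • v))) v‖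
          ≤ ‖ContinuousLinearMap.id ℝ Y - Dinv.comp (DG (y + t • v))‖ * ‖v‖ :=
            ContinuousLinearMap.le_opNorm _ _
        _ ≤ (L * ‖y + t • v - y₀‖) * ‖v‖ :=
            mul_le_mul_of_nonneg_right (hDFnorm _ (hmem t ht')) (norm_nonneg v)
        _ ≤ (L * ((1 - t) * a + t * b)) * ‖v‖ :=
            mul_le_mul_of_nonneg_right
              (mul_le_mul_of_nonneg_left (hxt t ht') hL.le) (norm_nonneg v)
        _ = L * ‖v‖ * (a + (b - a) * t) := by ring
    have hmain := image_norm_le_of_norm_deriv_right_le_deriv_boundary hgc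
      (fun t ht => (hg' t ⟨ht.1, ht.2.le⟩).hasDerivWithinAt)
      (by simp [hg, hB]) hBd bound (Set.right_mem_Icc.2 zero_le_one)
    have hg1 : g 1 = F z - F y := by simp [hg, hv]
    rw [hg1] at hmain
    calc ‖F z - F y‖ ≤ B 1 := hmain
      _ = L * ((a + b) / 2) * ‖v‖ := by rw [hB]; ring
      _ = L * ((a + b) / 2) * ‖z - y‖ := by rw [hv]
  have hFy₀ : ‖F y₀ - y₀‖ ≤ β := by
    have h1 : F y₀ - y₀ = -(Dinv (G y₀)) := by simp only [hF]; abel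
    rw [h1, norm_neg]; exact hres
  -- F maps the small ball into itself
  have hmaps : ∀ y ∈ closedBall y₀ r, F y ∈ closedBall y₀ r := by
    intro y hy
    have hy' : y ∈ closedBall y₀ L⁻¹ := closedBall_subset_closedBall hrL hy
    have hyr : ‖y - y₀‖ ≤ r := mem_closedBall_iff_norm.1 hy
    have hyn : 0 ≤ ‖y - y₀‖ := norm_nonneg _
    have h1 := keyA y₀ h0big y hy'
    simp only [sub_self, norm_zero, zero_add] at h1
    rw [mem_closedBall_iff_norm]
    calc ‖F y - y₀‖ ≤ ‖F y - F y₀‖ + ‖F y₀ - y₀‖ :=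
          norm_sub_le_norm_sub_add_norm_sub _ _ _
      _ ≤ L * (‖y - y₀‖ / 2) * ‖y - y₀‖ + β := by gcongr
      _ ≤ L * (r / 2) * r + β := by
          have := mul_le_mul (mul_le_mul_of_nonneg_left (by linarith : ‖y - y₀‖ / 2 ≤ r / 2) hL.le)
            hyr hyn (by positivity)
          linarith
      _ ≤ r := by
          have heq : L * r * r = (1 - s) * r := by rw [hLr]
          have hkey : (1 + s) * r = 2 * β := by
            rw [hr_def]
            field_simp
            nlinarith [hs_sq]
          nlinarith [heq, hkey]
  -- fixed point via Banach
  haveI : CompleteSpace (closedBall y₀ r) :=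
    (isClosed_closedBall : IsClosed (closedBall y₀ r)).completeSpace_coe
  haveI : Nonempty (closedBall y₀ r) := ⟨⟨y₀, mem_closedBall_self hr0.le⟩⟩
  set f : closedBall y₀ r → closedBall y₀ r := fun x => ⟨F x, hmaps x x.2⟩ with hf
  have hk1 : (0:ℝ) ≤ 1 - s := by linarith
  set k : NNReal := ⟨1 - s, hk1⟩ with hk
  have hcontr : ContractingWith k f := by
    constructor
    · rw [← NNReal.coe_lt_one]; show (1 - s : ℝ) < 1; linarith
    · apply LipschitzWith.of_dist_le_mul
      intro x w
      simp only [Subtype.dist_eq, dist_eq_norm]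
      have hx : (x:Y) ∈ closedBall y₀ L⁻¹ := closedBall_subset_closedBall hrL x.2
      have hw : (w:Y) ∈ closedBall y₀ L⁻¹ := closedBall_subset_closedBall hrL w.2
      have h1 := keyA w hw x hx
      have hxr : ‖(x:Y) - y₀‖ ≤ r := mem_closedBall_iff_norm.1 x.2
      have hwr : ‖(w:Y) - y₀‖ ≤ r := mem_closedBall_iff_norm.1 w.2
      have hn : 0 ≤ ‖(x:Y) - (w:Y)‖ := norm_nonneg _
      have hc : L * ((‖(w:Y) - y₀‖ + ‖(x:Y) - y₀‖) / 2) ≤ 1 - s := by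
        have h2 : L * ((‖(w:Y) - y₀‖ + ‖(x:Y) - y₀‖) / 2) ≤ L * r :=
          mul_le_mul_of_nonneg_left (by linarith) hL.le
        linarith
      calc ‖F x - F w‖ ≤ L * ((‖(w:Y) - y₀‖ + ‖(x:Y) - y₀‖) / 2) * ‖(x:Y) - w‖ := h1
        _ ≤ (1 - s) * ‖(x:Y) - w‖ := mul_le_mul_of_nonneg_right hc (norm_nonneg _)
        _ = (k:ℝ) * ‖(x:Y) - w‖ := rfl
  set xstar := ContractingWith.fixedPoint f hcontr with hx_def
  have hfix : f xstar = xstar := ContractingWith.fixedPoint_isFixedPt hcontr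
  set ystar : Y := (xstar : Y) with hy_star
  have hFfix : F ystar = ystar := congrArg Subtype.val hfix
  have hGzero : G ystar = 0 := by
    have h1 : Dinv (G ystar) = 0 := by
      have := hFfix
      rw [hF] at this
      simpa [sub_eq_self] using this
    have h2 : (DG y₀).comp Dinv (G ystar) = G ystar := by rw [hinv₂]; rfl
    rw [← h2]
    simp [h1]
  refine ⟨ystar, ?_, hGzero, ?_⟩
  · exact mem_closedBall_iff_norm.1 xstar.2
  · intro z hz hGz
    have hFz : F z = z := by rw [hF]; simp [hGz]
    have hybig : ystar ∈ closedBall y₀ L⁻¹ := closedBall_subset_closedBall hrL xstar.2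
    have h1 := keyA ystar hybig z hz
    rw [hFz, hFfix] at h1
    have hyr : ‖ystar - y₀‖ ≤ r := mem_closedBall_iff_norm.1 xstar.2
    have hzb : ‖z - y₀‖ ≤ L⁻¹ := mem_closedBall_iff_norm.1 hz
    have hLz : L * ‖z - y₀‖ ≤ 1 := by
      have := mul_le_mul_of_nonneg_left hzb hL.le
      rwa [mul_inv_cancel₀ hL.ne'] at this
    have hn : 0 ≤ ‖z - ystar‖ := norm_nonneg _
    have hyn : 0 ≤ ‖ystar - y₀‖ := norm_nonneg _
    have hLa : L * ‖ystar - y₀‖ ≤ 1 - s := by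
      rw [← hLr]; exact mul_le_mul_of_nonneg_left hyr hL.le
    have hc : L * ((‖ystar - y₀‖ + ‖z - y₀‖) / 2) ≤ 1 - s / 2 := by linarith
    have h2 : ‖z - ystar‖ ≤ (1 - s / 2) * ‖z - ystar‖ :=
      h1.trans (mul_le_mul_of_nonneg_right hc hn)
    have hle : ‖z - ystar‖ ≤ 0 := by
      by_contra hcon
      push_neg at hcon
      have h3 : 0 < s / 2 * ‖z - ystar‖ := mul_pos (half_pos hs0) hcon
      have h4 : (1 - s / 2) * ‖z - ystar‖ = ‖z - ystar‖ - s / 2 * ‖z - ystar‖ := by ring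
      linarith
    have hzero : ‖z - ystar‖ = 0 := le_antisymm hle hn
    exact sub_eq_zero.1 (norm_eq_zero.1 hzero)
end

section
/- Inexact Newton–Kantorovich iteration estimates: let Y be a real Banach space, U ⊆ Y open, G : U → Y continuously Fréchet differentiable, y₀ ∈ U with DG(y₀) invertible with bounded inverse, and β, L > 0 with βL < 1/2, B(y₀, L^{-1}) ⊆ U, ‖DG(y₀)^{-1}(DG(z) − DG(y))‖ ≤ L‖z − y‖ for all y, z ∈ B(y₀, L^{-1}), and ‖DG(y₀)^{-1}G(y₀)‖ ≤ β. Let θ ≥ 0 satisfy θ ≤ (1 − √(2βL))/(1 + √(2βL)), and suppose (y_j)_{j≥0} ⊆ U and (r_j)_{j≥0} ⊆ Y are sequences with y_0 = y₀ such that for every j ∈ ℕ₀: DG(y_j) is invertible, y_{j+1} = y_j + δ_j where DG(y_j)δ_j = −G(y_j) + r_j, and ‖DG(y₀)^{-1} r_j‖ ≤ θ‖DG(y₀)^{-1} G(y_j)‖. Then every iterate y_j lies in the closed ball B(y₀, √(2βL)/L), and, with y* denoting the unique zero of G in B(y₀, L^{-1}), for every j ∈ ℕ₀ one has ‖y_{j+1}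 − y*‖ ≤ [L(1+θ)/(2(1 − √(2βL)))·‖y_j − y*‖ + θ(1 + √(2βL))/(1 − √(2βL))]·‖y_j − y*‖. -/
open Metric

section scalar

lemma coreH (t θ : ℝ) (htp : 0 < t) (ht1 : t < 1) (hθ0 : 0 ≤ θ)
    (hθ : θ * (1 + t) ≤ 1 - t) :
    ((1+θ)*t/2)^2*(1-t) + 2*t*((1+θ)*t/2) - t*(1-θ) + (1-t)*((1+θ)*t/2 - 1 + θ) ≤ 0 := by
  nlinarith [sq_nonneg (1 - t), sq_nonneg (1 + t), mul_nonneg hθ0 htp.le,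
    mul_nonneg (mul_nonneg hθ0 htp.le) htp.le, sq_nonneg t, sq_nonneg θ,
    mul_nonneg (sub_nonneg.2 hθ) (sub_nonneg.2 ht1.le),
    mul_nonneg (sub_nonneg.2 hθ) htp.le,
    mul_nonneg (mul_nonneg (sub_nonneg.2 hθ) htp.le) htp.le]

lemma core1 (t θ m u w x : ℝ) (htp : 0 < t) (ht1 : t < 1) (hθ0 : 0 ≤ θ)
    (hu0 : 0 ≤ u) (hx0 : 0 ≤ x) (hm0 : 0 ≤ m) (hx : x ≤ m * u)
    (hw : w = 1 - t + u)
    (hlin : (m^2*(1-t)/2 + t*m - t*(1-θ)/2) * u + (1 - t) * (t/2) * (m - (1 - θ)) ≤ 0) :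
    x ^ 2 / 2 + θ * ((t / 2) * u * w) ≤ (t / 2) * (u - x) * (w - x) := by
  subst hw
  have key := mul_nonneg hu0 (neg_nonneg.2 hlin)
  have h3 : (m*u)^2*(1-t)/2 + (t/2)*(m*u)*(u + (1-t+u)) ≤ (t/2)*(1-θ)*u*(1-t+u) := by
    nlinarith [key]
  have hbr : 0 ≤ (x + m*u)*(1-t)/2 + (t/2)*(u + (1-t+u)) := by
    have h1 : 0 ≤ (x + m*u)*(1-t) := mul_nonneg (by nlinarith [mul_nonneg hm0 hu0]) (by linarith)
    have h2 : 0 ≤ (t/2)*(u+(1-t+u)) := mul_nonneg (by linarith) (by linarith)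
    linarith
  have h2 : x^2*(1-t)/2 + (t/2)*x*(u + (1-t+u)) ≤ (m*u)^2*(1-t)/2 + (t/2)*(m*u)*(u + (1-t+u)) := by
    have hxmu : 0 ≤ m*u - x := by linarith
    nlinarith [mul_nonneg hxmu hbr]
  nlinarith [h2, h3]

lemma core0 (t θ σ x : ℝ) (htp : 0 < t) (ht1 : t < 1) (hθ0 : 0 ≤ θ)
    (hθ : θ * (1 + t) ≤ 1 - t) (hσ0 : 0 ≤ σ) (hσt : σ ≤ t) (hx0 : 0 ≤ x)
    (hxb : (1 - σ) * x ≤ (1 + θ) * (t / 2) * (t - σ) * (1 - σ)) :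
    x ^ 2 / 2 + θ * ((t / 2) * (t - σ) * (1 - σ)) ≤ (t / 2) * (t - σ - x) * (1 - σ - x) := by
  have h1σ : 0 < 1 - σ := by linarith
  have hm0 : (0:ℝ) ≤ (1 + θ) * t / 2 := by positivity
  have hx : x ≤ ((1 + θ) * t / 2) * (t - σ) := by
    have he : (1 + θ) * (t / 2) * (t - σ) * (1 - σ) = (1 - σ) * (((1 + θ) * t / 2) * (t - σ)) := by
      ring
    rw [he] at hxb
    exact le_of_mul_le_mul_left hxb h1σ
  have hm1θ : (1 + θ) * t / 2 ≤ 1 - θ := by nlinarith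
  have hc0 : (1 - t) * (t/2) * ((1 + θ) * t / 2 - (1 - θ)) ≤ 0 := by
    have h1 : 0 ≤ 1 - θ - (1 + θ) * t / 2 := by linarith
    nlinarith [mul_nonneg (mul_nonneg (sub_nonneg.2 ht1.le) htp.le) h1]
  have hc1 : (((1 + θ) * t / 2)^2*(1-t)/2 + t*((1 + θ) * t / 2) - t*(1-θ)/2) * t
      + (1 - t) * (t/2) * ((1 + θ) * t / 2 - (1 - θ)) ≤ 0 := by
    have hH := coreH t θ htp ht1 hθ0 hθ
    nlinarith [mul_nonneg htp.le (neg_nonneg.2 hH)]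
  have hlin : (((1 + θ) * t / 2)^2*(1-t)/2 + t*((1 + θ) * t / 2) - t*(1-θ)/2) * (t - σ)
      + (1 - t) * (t/2) * ((1 + θ) * t / 2 - (1 - θ)) ≤ 0 := by
    nlinarith [mul_nonneg (sub_nonneg.2 hσt) (neg_nonneg.2 hc1),
      mul_nonneg hσ0 (neg_nonneg.2 hc0), htp]
  have h := core1 t θ ((1 + θ) * t / 2) (t - σ) (1 - σ) x htp ht1 hθ0
    (by linarith) hx0 hm0 hx (by ring) hlin
  linarith [h]

lemma loc_zero (σ t : ℝ) (ht0 : 0 < t) (h1 : σ ≤ 1) (ht1 : t < 1) (h3 : 2*σ ≤ t^2 + σ^2) :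
    σ ≤ t := by
  by_contra h
  push_neg at h
  have h2 := mul_pos (sub_pos.2 h) (by linarith : (0:ℝ) < 2 - σ - t)
  nlinarith [h2, ht0]

end scalar

section aux
variable {Y : Type*} [NormedAddCommGroup Y] [NormedSpace ℝ Y]

lemma taylor_bound (U : Set Y) (G : Y → Y) (DG : Y → Y →L[ℝ] Y)
    (hderiv : ∀ y ∈ U, HasFDerivAt G (DG y) y)
    (y₀ : Y) (Dinv : Y →L[ℝ] Y) (L : ℝ)
    (hball : closedBall y₀ L⁻¹ ⊆ U)
    (hLipv : ∀ p ∈ closedBall y₀ L⁻¹, ∀ q ∈ closedBall y₀ L⁻¹, ∀ v : Y,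
      ‖Dinv (DG q v) - Dinv (DG p v)‖ ≤ L * ‖q - p‖ * ‖v‖)
    (a : Y) (ha : a ∈ closedBall y₀ L⁻¹) (b : Y) (hb : b ∈ closedBall y₀ L⁻¹) :
    ‖Dinv (G b) - Dinv (G a) - Dinv (DG a (b - a))‖ ≤ L / 2 * ‖b - a‖ ^ 2 := by
  set v : Y := b - a with hv
  have hseg : ∀ τ ∈ Set.Icc (0:ℝ) 1, a + τ • v ∈ closedBall y₀ L⁻¹ := by
    intro τ hτ
    have h := (convex_closedBall y₀ L⁻¹) ha hb (by linarith [hτ.2] : (0:ℝ) ≤ 1 - τ) hτ.1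
      (by ring)
    convert h using 1
    rw [hv]; module
  have hg : ∀ τ ∈ Set.Icc (0:ℝ) 1,
      HasDerivAt (fun τ : ℝ => Dinv (G (a + τ • v))) (Dinv (DG (a + τ • v) v)) τ := by
    intro τ hτ
    have hmem := hball (hseg τ hτ)
    have h1 : HasDerivAt (fun τ : ℝ => a + τ • v) v τ := by
      simpa using ((hasDerivAt_id τ).smul_const v).const_add a
    have h2 := (hderiv _ hmem).comp_hasDerivAt τ h1
    exact Dinv.hasFDerivAt.comp_hasDerivAt τ h2
  have hc : ∀ τ : ℝ, HasDerivAt (fun τ : ℝ => τ • (Dinv (DG a v))) (Dinv (DG a v)) τ := by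
    intro τ
    simpa using (hasDerivAt_id τ).smul_const (Dinv (DG a v))
  set f : ℝ → Y := fun τ => Dinv (G (a + τ • v)) - Dinv (G a) - τ • (Dinv (DG a v)) with hf
  have hfd : ∀ τ ∈ Set.Icc (0:ℝ) 1,
      HasDerivAt f (Dinv (DG (a + τ • v) v) - Dinv (DG a v)) τ := by
    intro τ hτ
    exact ((hg τ hτ).sub_const _).sub (hc τ)
  have hBd : ∀ x : ℝ, HasDerivAt (fun τ : ℝ => L * ‖v‖ ^ 2 / 2 * τ ^ 2) (L * ‖v‖ ^ 2 * x) x := by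
    intro x
    have := (hasDerivAt_pow 2 x).const_mul (L * ‖v‖ ^ 2 / 2)
    refine this.congr_deriv ?_
    simp; ring
  have key := image_norm_le_of_norm_deriv_right_le_deriv_boundary
    (f := f) (a := (0:ℝ)) (b := 1)
    (fun τ hτ => (hfd τ hτ).continuousAt.continuousWithinAt)
    (fun τ hτ => (hfd τ (Set.Ico_subset_Icc_self hτ)).hasDerivWithinAt)
    (B := fun τ => L * ‖v‖ ^ 2 / 2 * τ ^ 2) (B' := fun τ => L * ‖v‖ ^ 2 * τ)
    (by simp [hf]) hBd
    (by
      intro τ hτ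
      have hpt := hseg τ (Set.Ico_subset_Icc_self hτ)
      have h1 := hLipv a ha (a + τ • v) hpt v
      have h2 : ‖a + τ • v - a‖ = τ * ‖v‖ := by
        simp [norm_smul, abs_of_nonneg hτ.1]
      rw [h2] at h1
      calc ‖Dinv (DG (a + τ • v) v) - Dinv (DG a v)‖ ≤ L * (τ * ‖v‖) * ‖v‖ := h1
      _ = L * ‖v‖ ^ 2 * τ := by ring)
    (Set.right_mem_Icc.2 zero_le_one)
  have hfone : f 1 = Dinv (G b) - Dinv (G a) - Dinv (DG a (b - a)) := by
    simp [hf, hv]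
  rw [hfone] at key
  calc ‖Dinv (G b) - Dinv (G a) - Dinv (DG a (b - a))‖ ≤ L * ‖v‖ ^ 2 / 2 * 1 ^ 2 := key
  _ = L / 2 * ‖b - a‖ ^ 2 := by rw [hv]; ring

lemma first_order (U : Set Y) (G : Y → Y) (DG : Y → Y →L[ℝ] Y)
    (hderiv : ∀ y ∈ U, HasFDerivAt G (DG y) y)
    (y₀ : Y) (Dinv : Y →L[ℝ] Y)
    (hinv₁ : Dinv.comp (DG y₀) = ContinuousLinearMap.id ℝ Y)
    (L : ℝ) (hL : 0 < L)
    (hball : closedBall y₀ L⁻¹ ⊆ U)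
    (hLip : ∀ y ∈ closedBall y₀ L⁻¹, ∀ z ∈ closedBall y₀ L⁻¹,
      ‖Dinv.comp (DG z - DG y)‖ ≤ L * ‖z - y‖)
    (ρ : ℝ) (hρ : ρ ≤ L⁻¹)
    (a : Y) (ha : a ∈ closedBall y₀ ρ) (b : Y) (hb : b ∈ closedBall y₀ ρ) :
    ‖Dinv (G b) - Dinv (G a) - (b - a)‖ ≤ L * ρ * ‖b - a‖ := by
  have hsub : closedBall y₀ ρ ⊆ closedBall y₀ L⁻¹ := closedBall_subset_closedBall hρ
  have key := Convex.norm_image_sub_le_of_norm_hasFDerivWithin_le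
    (f := fun w => Dinv (G w) - w)
    (f' := fun w => (Dinv.comp (DG w)) - ContinuousLinearMap.id ℝ Y)
    (C := L * ρ) (s := closedBall y₀ ρ)
    (fun w hw => (((Dinv.hasFDerivAt.comp w (hderiv w (hball (hsub hw)))).sub
      (hasFDerivAt_id w))).hasFDerivWithinAt)
    (by
      intro w hw
      show ‖Dinv.comp (DG w) - ContinuousLinearMap.id ℝ Y‖ ≤ L * ρ
      have he : Dinv.comp (DG w) - ContinuousLinearMap.id ℝ Y = Dinv.comp (DG w - DG y₀) := by
        rw [ContinuousLinearMap.comp_sub, hinv₁]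
      rw [he]
      have h1 := hLip y₀ (mem_closedBall_self (by positivity)) w (hsub hw)
      have h2 : ‖w - y₀‖ ≤ ρ := mem_closedBall_iff_norm.1 hw
      calc ‖Dinv.comp (DG w - DG y₀)‖ ≤ L * ‖w - y₀‖ := h1
      _ ≤ L * ρ := by nlinarith)
    (convex_closedBall y₀ ρ) ha hb
  have he2 : (Dinv (G b) - b) - (Dinv (G a) - a) = Dinv (G b) - Dinv (G a) - (b - a) := by abel
  rw [he2] at key
  exact key

end aux

set_option maxHeartbeats 2000000 in
/-- Inexact Newton–Kantorovich iteration estimates: under the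
Newton–Kantorovich hypotheses, if the inexact Newton iterates `y_{j+1} = y_j + δ_j` with
`DG(y_j) δ_j = −G(y_j) + r_j` satisfy the relative residual bound
`‖DG(y₀)⁻¹ r_j‖ ≤ θ ‖DG(y₀)⁻¹ G(y_j)‖` with
`θ ≤ (1 − √(2βL))/(1 + √(2βL))`, then every iterate lies in `B(y₀, √(2βL)/L)` and, with
`y*` the (unique) zero of `G` in `B(y₀, L⁻¹)`,
`‖y_{j+1} − y*‖ ≤ [L(1+θ)/(2(1−√(2βL)))·‖y_j − y*‖ + θ(1+√(2βL))/(1−√(2βL))]·‖y_j − y*‖`. -/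
theorem stmt11
    {Y : Type*} [NormedAddCommGroup Y] [NormedSpace ℝ Y] [CompleteSpace Y]
    (U : Set Y) (hU : IsOpen U)
    (G : Y → Y) (DG : Y → Y →L[ℝ] Y)
    (hderiv : ∀ y ∈ U, HasFDerivAt G (DG y) y)
    (hcont : ContinuousOn DG U)
    (y₀ : Y) (hy₀ : y₀ ∈ U)
    (Dinv : Y →L[ℝ] Y)
    (hinv₁ : Dinv.comp (DG y₀) = ContinuousLinearMap.id ℝ Y)
    (hinv₂ : (DG y₀).comp Dinv = ContinuousLinearMap.id ℝ Y)
    (β L : ℝ) (hβ : 0 < β) (hL : 0 < L) (hβL : β * L < 1 / 2)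
    (hball : closedBall y₀ L⁻¹ ⊆ U)
    (hLip : ∀ y ∈ closedBall y₀ L⁻¹, ∀ z ∈ closedBall y₀ L⁻¹,
      ‖Dinv.comp (DG z - DG y)‖ ≤ L * ‖z - y‖)
    (hres₀ : ‖Dinv (G y₀)‖ ≤ β)
    (θ : ℝ) (hθ0 : 0 ≤ θ)
    (hθ : θ ≤ (1 - Real.sqrt (2 * β * L)) / (1 + Real.sqrt (2 * β * L)))
    (y : ℕ → Y) (r : ℕ → Y)
    (hy0 : y 0 = y₀)
    (hbij : ∀ j : ℕ, Function.Bijective (DG (y j)))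
    (hstep : ∀ j : ℕ, DG (y j) (y (j + 1) - y j) = -(G (y j)) + r j)
    (hrel : ∀ j : ℕ, ‖Dinv (r j)‖ ≤ θ * ‖Dinv (G (y j))‖) :
    (∀ j : ℕ, y j ∈ closedBall y₀ (Real.sqrt (2 * β * L) / L)) ∧
    ∀ ystar ∈ closedBall y₀ L⁻¹, G ystar = 0 →
      ∀ j : ℕ,
        ‖y (j + 1) - ystar‖ ≤
          (L * (1 + θ) / (2 * (1 - Real.sqrt (2 * β * L))) * ‖y j - ystar‖ +
            θ * (1 + Real.sqrt (2 * β * L)) / (1 - Real.sqrt (2 * β * L))) *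
          ‖y j - ystar‖ := by
  set t : ℝ := Real.sqrt (2 * β * L) with htdef
  have h2βL : (0:ℝ) < 2 * β * L := by positivity
  have ht0 : 0 < t := Real.sqrt_pos.2 h2βL
  have ht2 : t ^ 2 = 2 * β * L := Real.sq_sqrt h2βL.le
  have ht1 : t < 1 := by nlinarith
  have htL : t / L ≤ L⁻¹ := by
    rw [← one_div L]
    gcongr
  have hθt : θ * (1 + t) ≤ 1 - t := by
    have h1t : (0:ℝ) < 1 + t := by linarith
    calc θ * (1 + t) ≤ ((1 - t) / (1 + t)) * (1 + t) := by
          apply mul_le_mul_of_nonneg_right hθ h1t.le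
    _ = 1 - t := by field_simp
  -- identity application of hinv₁
  have hid : ∀ v : Y, Dinv (DG y₀ v) = v := by
    intro v
    have := congrArg (fun T : Y →L[ℝ] Y => T v) hinv₁
    simpa using this
  -- vectorized Lipschitz
  have hLipv : ∀ p ∈ closedBall y₀ L⁻¹, ∀ q ∈ closedBall y₀ L⁻¹, ∀ v : Y,
      ‖Dinv (DG q v) - Dinv (DG p v)‖ ≤ L * ‖q - p‖ * ‖v‖ := by
    intro p hp q hq v
    have h1 := (Dinv.comp (DG q - DG p)).le_opNorm v
    have h2 : (Dinv.comp (DG q - DG p)) v = Dinv (DG q v) - Dinv (DG p v) := by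
      simp [ContinuousLinearMap.comp_apply, ContinuousLinearMap.sub_apply, map_sub]
    rw [h2] at h1
    calc ‖Dinv (DG q v) - Dinv (DG p v)‖ ≤ ‖Dinv.comp (DG q - DG p)‖ * ‖v‖ := h1
    _ ≤ (L * ‖q - p‖) * ‖v‖ := by
        apply mul_le_mul_of_nonneg_right (hLip p hp q hq) (norm_nonneg v)
  have hy₀cb : y₀ ∈ closedBall y₀ L⁻¹ := mem_closedBall_self (by positivity)
  -- lower bound
  have hlower : ∀ a ∈ closedBall y₀ L⁻¹, ∀ v : Y,
      (1 - L * ‖a - y₀‖) * ‖v‖ ≤ ‖Dinv (DG a v)‖ := by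
    intro a ha v
    have h1 := hLipv y₀ hy₀cb a ha v
    rw [hid v] at h1
    have h2 : ‖v‖ - ‖Dinv (DG a v)‖ ≤ ‖Dinv (DG a v) - v‖ := by
      have := norm_sub_norm_le v (Dinv (DG a v))
      calc ‖v‖ - ‖Dinv (DG a v)‖ ≤ ‖v - Dinv (DG a v)‖ := this
      _ = ‖Dinv (DG a v) - v‖ := by rw [norm_sub_rev]
    nlinarith [h1, h2]
  -- location of zeros
  have hzero : ∀ z ∈ closedBall y₀ L⁻¹, G z = 0 → ‖z - y₀‖ ≤ t / L := by
    intro z hz hGz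
    have h1 := taylor_bound U G DG hderiv y₀ Dinv L hball hLipv y₀ hy₀cb z hz
    rw [hGz, hid (z - y₀)] at h1
    simp only [map_zero] at h1
    have h3 : ‖0 - Dinv (G y₀) - (z - y₀)‖ = ‖(z - y₀) + Dinv (G y₀)‖ := by
      rw [← norm_neg]; congr 1; abel
    rw [h3] at h1
    have h4 : ‖z - y₀‖ ≤ ‖(z - y₀) + Dinv (G y₀)‖ + ‖Dinv (G y₀)‖ := by
      have := norm_add_le ((z - y₀) + Dinv (G y₀)) (-(Dinv (G y₀)))
      simpa using this
    have hs : ‖z - y₀‖ ≤ β + L / 2 * ‖z - y₀‖ ^ 2 := by linarith [h1, h4, hres₀]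
    have hsL : ‖z - y₀‖ ≤ L⁻¹ := mem_closedBall_iff_norm.1 hz
    have key := loc_zero (L * ‖z - y₀‖) t ht0 (by
        calc L * ‖z - y₀‖ ≤ L * L⁻¹ := by nlinarith
        _ = 1 := by field_simp) ht1 (by nlinarith [hs, ht2])
    have he : ‖z - y₀‖ = (L * ‖z - y₀‖) / L := by field_simp
    rw [he]
    gcongr
  -- the invariant
  have hinv : ∀ j : ℕ, ‖y j - y₀‖ ≤ t / L ∧
      ‖Dinv (G (y j))‖ ≤ (t/2) * (t/L - ‖y j - y₀‖) * (1 - L * ‖y j - y₀‖) := by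
    intro j
    induction j with
    | zero =>
      rw [hy0]
      simp only [sub_self, norm_zero, mul_zero, sub_zero, mul_one]
      constructor
      · positivity
      · have he : (t/2) * (t/L) = β := by
          field_simp
          nlinarith [ht2]
        rw [he]
        exact hres₀
    | succ j ih =>
      obtain ⟨hs, ha⟩ := ih
      have hsL : ‖y j - y₀‖ ≤ L⁻¹ := le_trans hs htL
      have hyjcb : y j ∈ closedBall y₀ L⁻¹ := mem_closedBall_iff_norm.2 hsL
      have h1Ls : t ≤ 1 - (1 - L * ‖y j - y₀‖) + (1 - L * ‖y j - y₀‖) := by ring_nf; linarith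
      have hLs_t : L * ‖y j - y₀‖ ≤ t := by
        calc L * ‖y j - y₀‖ ≤ L * (t / L) := by gcongr
        _ = t := by field_simp
      have h1Lspos : 0 < 1 - L * ‖y j - y₀‖ := by linarith
      -- step bound
      have hDd : Dinv (DG (y j) (y (j+1) - y j)) = -(Dinv (G (y j))) + Dinv (r j) := by
        rw [hstep j, map_add, map_neg]
      have hlow := hlower (y j) hyjcb (y (j+1) - y j)
      have hup : ‖Dinv (DG (y j) (y (j+1) - y j))‖ ≤ (1 + θ) * ‖Dinv (G (y j))‖ := by
        rw [hDd]
        calc ‖-(Dinv (G (y j))) + Dinv (r j)‖ ≤ ‖-(Dinv (G (y j)))‖ + ‖Dinv (r j)‖ :=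
              norm_add_le _ _
        _ ≤ ‖Dinv (G (y j))‖ + θ * ‖Dinv (G (y j))‖ := by
              rw [norm_neg]; linarith [hrel j]
        _ = (1 + θ) * ‖Dinv (G (y j))‖ := by ring
      have hd : (1 - L * ‖y j - y₀‖) * ‖y (j+1) - y j‖ ≤ (1 + θ) * ‖Dinv (G (y j))‖ :=
        le_trans hlow hup
      have hdφ : (1 - L * ‖y j - y₀‖) * ‖y (j+1) - y j‖ ≤
          (1 + θ) * ((t/2) * (t/L - ‖y j - y₀‖) * (1 - L * ‖y j - y₀‖)) := by
        calc (1 - L * ‖y j - y₀‖) * ‖y (j+1) - y j‖ ≤ (1 + θ) * ‖Dinv (G (y j))‖ := hd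
        _ ≤ (1 + θ) * ((t/2) * (t/L - ‖y j - y₀‖) * (1 - L * ‖y j - y₀‖)) := by
            apply mul_le_mul_of_nonneg_left ha (by linarith)
      -- dimensionless core
      have hLtL : L * (t / L) = t := by field_simp
      have hxb : (1 - L * ‖y j - y₀‖) * (L * ‖y (j+1) - y j‖) ≤
          (1 + θ) * (t / 2) * (t - L * ‖y j - y₀‖) * (1 - L * ‖y j - y₀‖) := by
        have e1 : (1 + θ) * (t / 2) * (t - L * ‖y j - y₀‖) * (1 - L * ‖y j - y₀‖)
            = L * ((1 + θ) * ((t/2) * (t/L - ‖y j - y₀‖) * (1 - L * ‖y j - y₀‖))) := by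
          field_simp
        have e2 : (1 - L * ‖y j - y₀‖) * (L * ‖y (j+1) - y j‖)
            = L * ((1 - L * ‖y j - y₀‖) * ‖y (j+1) - y j‖) := by ring
        rw [e1, e2]
        exact mul_le_mul_of_nonneg_left hdφ hL.le
      have hcore := core0 t θ (L * ‖y j - y₀‖) (L * ‖y (j+1) - y j‖) ht0 ht1 hθ0 hθt
        (by positivity) hLs_t (by positivity) hxb
      -- d ≤ t/L - s
      have hdd : L * ‖y (j+1) - y j‖ ≤ t - L * ‖y j - y₀‖ := by
        have hmt : (1 + θ) * (t/2) ≤ 1 := by nlinarith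
        have h5 : (1 - L * ‖y j - y₀‖) * (L * ‖y (j+1) - y j‖) ≤
            (1 - L * ‖y j - y₀‖) * (t - L * ‖y j - y₀‖) := by
          calc (1 - L * ‖y j - y₀‖) * (L * ‖y (j+1) - y j‖) ≤
              (1 + θ) * (t / 2) * (t - L * ‖y j - y₀‖) * (1 - L * ‖y j - y₀‖) := hxb
          _ ≤ (1 - L * ‖y j - y₀‖) * (t - L * ‖y j - y₀‖) := by
              nlinarith [mul_nonneg (mul_nonneg (sub_nonneg.2 hLs_t) h1Lspos.le)
                (sub_nonneg.2 hmt)]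
        exact le_of_mul_le_mul_left h5 h1Lspos
      -- triangle
      have htri : ‖y (j+1) - y₀‖ ≤ ‖y j - y₀‖ + ‖y (j+1) - y j‖ := by
        have := norm_add_le (y (j+1) - y j) (y j - y₀)
        have he : y (j+1) - y j + (y j - y₀) = y (j+1) - y₀ := by abel
        rw [he] at this
        linarith
      have hs' : ‖y (j+1) - y₀‖ ≤ t / L := by
        rw [le_div_iff₀ hL]
        have := mul_le_mul_of_nonneg_left htri hL.le
        nlinarith [hdd]
      refine ⟨hs', ?_⟩
      have hs'L : ‖y (j+1) - y₀‖ ≤ L⁻¹ := le_trans hs' htL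
      have hyj1cb : y (j+1) ∈ closedBall y₀ L⁻¹ := mem_closedBall_iff_norm.2 hs'L
      -- a' ≤ L/2 d² + θ a
      have hGnext : Dinv (G (y (j+1))) =
          (Dinv (G (y (j+1))) - Dinv (G (y j)) - Dinv (DG (y j) (y (j+1) - y j)))
            + Dinv (r j) := by
        rw [hstep j, map_add, map_neg]
        abel
      have hT := taylor_bound U G DG hderiv y₀ Dinv L hball hLipv (y j) hyjcb (y (j+1)) hyj1cb
      have ha' : ‖Dinv (G (y (j+1)))‖ ≤ L/2 * ‖y (j+1) - y j‖^2 + θ * ‖Dinv (G (y j))‖ := by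
        rw [hGnext]
        calc ‖(Dinv (G (y (j+1))) - Dinv (G (y j)) - Dinv (DG (y j) (y (j+1) - y j)))
            + Dinv (r j)‖
            ≤ ‖Dinv (G (y (j+1))) - Dinv (G (y j)) - Dinv (DG (y j) (y (j+1) - y j))‖
              + ‖Dinv (r j)‖ := norm_add_le _ _
        _ ≤ L/2 * ‖y (j+1) - y j‖^2 + θ * ‖Dinv (G (y j))‖ := add_le_add hT (hrel j)
      -- convert hcore to dimensional
      have hdim : L/2 * ‖y (j+1) - y j‖^2
            + θ * ((t/2) * (t/L - ‖y j - y₀‖) * (1 - L * ‖y j - y₀‖))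
          ≤ (t/2) * (t/L - (‖y j - y₀‖ + ‖y (j+1) - y j‖))
            * (1 - L * (‖y j - y₀‖ + ‖y (j+1) - y j‖)) := by
        have e1 : L/2 * ‖y (j+1) - y j‖^2
              + θ * ((t/2) * (t/L - ‖y j - y₀‖) * (1 - L * ‖y j - y₀‖))
            = ((L * ‖y (j+1) - y j‖)^2/2
              + θ * ((t/2) * (t - L * ‖y j - y₀‖) * (1 - L * ‖y j - y₀‖))) / L := by
          field_simp
        have e2 : (t/2) * (t/L - (‖y j - y₀‖ + ‖y (j+1) - y j‖))
              * (1 - L * (‖y j - y₀‖ + ‖y (j+1) - y j‖))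
            = ((t/2) * (t - L * ‖y j - y₀‖ - L * ‖y (j+1) - y j‖)
              * (1 - L * ‖y j - y₀‖ - L * ‖y (j+1) - y j‖)) / L := by
          field_simp
          ring
        rw [e1, e2]
        apply div_le_div_of_nonneg_right ?_ hL.le
        · calc (L * ‖y (j+1) - y j‖)^2/2
              + θ * ((t/2) * (t - L * ‖y j - y₀‖) * (1 - L * ‖y j - y₀‖))
              ≤ (t/2) * (t - L * ‖y j - y₀‖ - L * ‖y (j+1) - y j‖)
                * (1 - L * ‖y j - y₀‖ - L * ‖y (j+1) - y j‖) := by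
                have := hcore
                nlinarith [hcore]
          _ = (t/2) * (t - L * ‖y j - y₀‖ - L * ‖y (j+1) - y j‖)
                * (1 - L * ‖y j - y₀‖ - L * ‖y (j+1) - y j‖) := by ring
      -- monotonicity of φ
      have hmono : (t/2) * (t/L - (‖y j - y₀‖ + ‖y (j+1) - y j‖))
            * (1 - L * (‖y j - y₀‖ + ‖y (j+1) - y j‖))
          ≤ (t/2) * (t/L - ‖y (j+1) - y₀‖) * (1 - L * ‖y (j+1) - y₀‖) := by
        have hq : L * (‖y j - y₀‖ + ‖y (j+1) - y j‖) ≤ t := by nlinarith [hdd]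
        have hσ1 : L * ‖y (j+1) - y₀‖ ≤ L * (‖y j - y₀‖ + ‖y (j+1) - y j‖) :=
          mul_le_mul_of_nonneg_left htri hL.le
        have e1 : (t/2) * (t/L - (‖y j - y₀‖ + ‖y (j+1) - y j‖))
              * (1 - L * (‖y j - y₀‖ + ‖y (j+1) - y j‖))
            = ((t/2) * (t - L * (‖y j - y₀‖ + ‖y (j+1) - y j‖))
              * (1 - L * (‖y j - y₀‖ + ‖y (j+1) - y j‖))) / L := by
          field_simp
        have e2 : (t/2) * (t/L - ‖y (j+1) - y₀‖) * (1 - L * ‖y (j+1) - y₀‖)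
            = ((t/2) * (t - L * ‖y (j+1) - y₀‖) * (1 - L * ‖y (j+1) - y₀‖)) / L := by
          field_simp
        rw [e1, e2]
        apply div_le_div_of_nonneg_right ?_ hL.le
        have hbr : 0 ≤ 1 + t - L * ‖y (j+1) - y₀‖ - L * (‖y j - y₀‖ + ‖y (j+1) - y j‖) := by
          linarith [hσ1, hq, ht1]
        nlinarith [mul_nonneg (mul_nonneg (show (0:ℝ) ≤ t/2 by linarith)
          (sub_nonneg.2 hσ1)) hbr]
      calc ‖Dinv (G (y (j+1)))‖ ≤ L/2 * ‖y (j+1) - y j‖^2 + θ * ‖Dinv (G (y j))‖ := ha'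
      _ ≤ L/2 * ‖y (j+1) - y j‖^2
            + θ * ((t/2) * (t/L - ‖y j - y₀‖) * (1 - L * ‖y j - y₀‖)) := by
          have := mul_le_mul_of_nonneg_left ha hθ0
          linarith
      _ ≤ (t/2) * (t/L - (‖y j - y₀‖ + ‖y (j+1) - y j‖))
            * (1 - L * (‖y j - y₀‖ + ‖y (j+1) - y j‖)) := hdim
      _ ≤ (t/2) * (t/L - ‖y (j+1) - y₀‖) * (1 - L * ‖y (j+1) - y₀‖) := hmono
  constructor
  · intro j
    exact mem_closedBall_iff_norm.2 (hinv j).1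
  · intro z hz hGz j
    have hzt : ‖z - y₀‖ ≤ t / L := hzero z hz hGz
    have hzcb : z ∈ closedBall y₀ (t/L) := mem_closedBall_iff_norm.2 hzt
    have hyjcb' : y j ∈ closedBall y₀ (t/L) := mem_closedBall_iff_norm.2 (hinv j).1
    have hyjcb : y j ∈ closedBall y₀ L⁻¹ :=
      closedBall_subset_closedBall htL hyjcb'
    -- Taylor at (y j), evaluated at z
    have hT := taylor_bound U G DG hderiv y₀ Dinv L hball hLipv (y j) hyjcb z hz
    rw [hGz] at hT
    simp only [map_zero] at hT
    -- ‖Dinv (DG (y j) (z - y j)) + Dinv (G (y j))‖ ≤ L/2 ‖e‖², where e = y j - z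
    have hmap : (DG (y j)) (y j - z) = -((DG (y j)) (z - y j)) := by
      rw [← map_neg]
      congr 1
      abel
    have he : Dinv (G (y j)) - Dinv (DG (y j) (y j - z))
        = -(0 - Dinv (G (y j)) - Dinv (DG (y j) (z - y j))) := by
      rw [hmap, map_neg]
      abel
    have hT' : ‖Dinv (DG (y j) (y j - z)) - Dinv (G (y j))‖ ≤ L/2 * ‖y j - z‖^2 := by
      calc ‖Dinv (DG (y j) (y j - z)) - Dinv (G (y j))‖
          = ‖Dinv (G (y j)) - Dinv (DG (y j) (y j - z))‖ := norm_sub_rev _ _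
      _ = ‖0 - Dinv (G (y j)) - Dinv (DG (y j) (z - y j))‖ := by rw [he, norm_neg]
      _ ≤ L/2 * ‖z - y j‖^2 := hT
      _ = L/2 * ‖y j - z‖^2 := by rw [norm_sub_rev]
    -- identity for e'
    have hsplit : Dinv (DG (y j) (y (j+1) - z))
        = (Dinv (DG (y j) (y j - z)) - Dinv (G (y j))) + Dinv (r j) := by
      have he : y (j+1) - z = (y j - z) + (y (j+1) - y j) := by abel
      rw [he, map_add, map_add, hstep j, map_add, map_neg]
      abel
    -- first order bound
    have hfo := first_order U G DG hderiv y₀ Dinv hinv₁ L hL hball hLip (t/L) htL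
      z hzcb (y j) hyjcb'
    rw [hGz] at hfo
    simp only [map_zero] at hfo
    have hGj : ‖Dinv (G (y j))‖ ≤ (1 + t) * ‖y j - z‖ := by
      have h1 : ‖Dinv (G (y j))‖ ≤ ‖Dinv (G (y j)) - 0 - (y j - z)‖ + ‖y j - z‖ := by
        have := norm_add_le (Dinv (G (y j)) - 0 - (y j - z)) (y j - z)
        have he : Dinv (G (y j)) - 0 - (y j - z) + (y j - z) = Dinv (G (y j)) := by abel
        rw [he] at this
        linarith
      have h2 : L * (t/L) = t := by field_simp
      rw [h2] at hfo
      nlinarith [hfo, h1, norm_nonneg (y j - z)]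
    -- lower bound
    have hlow := hlower (y j) hyjcb (y (j+1) - z)
    have h1t : (0:ℝ) < 1 - t := by linarith
    have hLsj : L * ‖y j - y₀‖ ≤ t := by
      calc L * ‖y j - y₀‖ ≤ L * (t/L) := by gcongr; exact (hinv j).1
      _ = t := by field_simp
    have hlow' : (1 - t) * ‖y (j+1) - z‖ ≤ ‖Dinv (DG (y j) (y (j+1) - z))‖ := by
      calc (1 - t) * ‖y (j+1) - z‖ ≤ (1 - L * ‖y j - y₀‖) * ‖y (j+1) - z‖ := by
            apply mul_le_mul_of_nonneg_right (by linarith) (norm_nonneg _)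
      _ ≤ ‖Dinv (DG (y j) (y (j+1) - z))‖ := hlow
    have hupper : ‖Dinv (DG (y j) (y (j+1) - z))‖
        ≤ L/2 * ‖y j - z‖^2 + θ * ((1 + t) * ‖y j - z‖) := by
      rw [hsplit]
      calc ‖(Dinv (DG (y j) (y j - z)) - Dinv (G (y j))) + Dinv (r j)‖
          ≤ ‖Dinv (DG (y j) (y j - z)) - Dinv (G (y j))‖ + ‖Dinv (r j)‖ := norm_add_le _ _
      _ ≤ L/2 * ‖y j - z‖^2 + θ * ((1 + t) * ‖y j - z‖) := by
          have h3 := hrel j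
          have h4 := mul_le_mul_of_nonneg_left hGj hθ0
          linarith [hT']
    have key : (1 - t) * ‖y (j+1) - z‖ ≤ L/2 * ‖y j - z‖^2 + θ * (1 + t) * ‖y j - z‖ := by
      calc (1 - t) * ‖y (j+1) - z‖ ≤ ‖Dinv (DG (y j) (y (j+1) - z))‖ := hlow'
      _ ≤ L/2 * ‖y j - z‖^2 + θ * ((1 + t) * ‖y j - z‖) := hupper
      _ = L/2 * ‖y j - z‖^2 + θ * (1 + t) * ‖y j - z‖ := by ring
    have hrhs : (L * (1 + θ) / (2 * (1 - t)) * ‖y j - z‖ + θ * (1 + t) / (1 - t)) * ‖y j - z‖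
        = (L * (1 + θ) / 2 * ‖y j - z‖^2 + θ * (1 + t) * ‖y j - z‖) / (1 - t) := by
      field_simp
    rw [hrhs, le_div_iff₀ h1t]
    have hθsq : L/2 * ‖y j - z‖^2 ≤ L * (1 + θ) / 2 * ‖y j - z‖^2 := by
      nlinarith [mul_nonneg (mul_nonneg hL.le hθ0) (sq_nonneg ‖y j - z‖)]
    nlinarith [key, hθsq]
end
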